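/- Suppose F : ℝ → ℂ has Fourier transform F̂ with ⟨s⟩² F̂(s) ∈ L¹(ℝ), and let k ∈ ℝ. Define G(λ) = d/dλ[(e^{ikλ} F(λ) − F(0))/λ]. Then the Fourier transform of G is integrable and ‖Ĝ‖_{L¹} ≲ ⟨k⟩² ‖⟨s⟩² F̂(s)‖_{L¹}, with implicit constant independent of k and F. -/

import Mathlib

open MeasureTheory Real Complex

noncomputable def nuFn (a t : ℝ) : ℝ :=
  if 0 < t ∧ t ≤ a then 1 else if a < t ∧ t ≤ 0 then -1 else 0

lemma nuFn_measurable (k : ℝ) : Measurable (fun p : ℝ × ℝ => nuFn (p.1 + k) p.2) := by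
  unfold nuFn
  refine Measurable.ite ?_ measurable_const
    (Measurable.ite ?_ measurable_const measurable_const)
  · exact (measurableSet_lt measurable_const measurable_snd).inter
      (measurableSet_le measurable_snd (measurable_fst.add_const k))
  · exact (measurableSet_lt (measurable_fst.add_const k) measurable_snd).inter
      (measurableSet_le measurable_snd measurable_const)

lemma nuFn_eq_zero {a t : ℝ} (ht : t ∉ Set.uIoc 0 a) : nuFn a t = 0 := by
  rw [Set.mem_uIoc] at ht
  unfold nuFn
  rw [if_neg (fun h => ht (Or.inl h)), if_neg (fun h => ht (Or.inr h))]

lemma nuFn_cases (a t : ℝ) :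
    nuFn a t = 0 ∨ (|nuFn a t| = 1 ∧ t ∈ Set.uIoc 0 a ∧ |t| ≤ |a|) := by
  by_cases ht : t ∈ Set.uIoc 0 a
  · have ht' := Set.mem_uIoc.1 ht
    have h1 : |nuFn a t| = 1 := by
      unfold nuFn
      rcases ht' with ⟨h1, h2⟩ | ⟨h1, h2⟩
      · rw [if_pos ⟨h1, h2⟩]; simp
      · rw [if_neg, if_pos ⟨h1, h2⟩]
        · simp
        · rintro ⟨h3, h4⟩; linarith
    have h2 : |t| ≤ |a| := by
      rcases ht' with ⟨h1, h2⟩ | ⟨h1, h2⟩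
      · rw [abs_of_pos h1, _root_.abs_of_nonneg (le_trans h1.le h2)]; exact h2
      · rw [abs_of_nonpos h2, abs_of_nonpos (by linarith)]; linarith
    exact Or.inr ⟨h1, ht, h2⟩
  · exact Or.inl (nuFn_eq_zero ht)

lemma uIoc_vol (a : ℝ) : volume (Set.uIoc 0 a) = ENNReal.ofReal |a| := by
  rw [Set.uIoc, Real.volume_Ioc]
  congr 1
  rw [max_sub_min_eq_abs]
  simp

lemma ind_integrable (a c : ℝ) :
    Integrable (Set.indicator (Set.uIoc 0 a) fun _ => c) := by
  rw [integrable_indicator_iff measurableSet_uIoc]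
  exact integrableOn_const (by rw [uIoc_vol]; exact ENNReal.ofReal_ne_top)

lemma ind_integral (a c : ℝ) :
    ∫ t, Set.indicator (Set.uIoc 0 a) (fun _ => c) t = |a| * c := by
  rw [integral_indicator_const _ measurableSet_uIoc, measureReal_def, uIoc_vol, smul_eq_mul,
    ENNReal.toReal_ofReal (abs_nonneg a)]

lemma nuFn_integral_exp (a m : ℝ) (hm : m ≠ 0) :
    ∫ t : ℝ, (nuFn a t : ℂ) * Complex.exp (Complex.I * m * t)
      = (Complex.exp (Complex.I * m * a) - 1) / (Complex.I * m) := by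
  have hc : (Complex.I * (m : ℂ)) ≠ 0 :=
    mul_ne_zero Complex.I_ne_zero (Complex.ofReal_ne_zero.2 hm)
  have key : (∫ x in (0:ℝ)..a, Complex.exp (Complex.I * m * x))
      = (Complex.exp (Complex.I * m * a) - 1) / (Complex.I * m) := by
    rw [integral_exp_mul_complex hc]
    norm_num
  rcases le_or_gt 0 a with ha | ha
  · have heq : ∀ t : ℝ, (nuFn a t : ℂ) * Complex.exp (Complex.I * m * t)
        = Set.indicator (Set.Ioc 0 a) (fun t : ℝ => Complex.exp (Complex.I * m * t)) t := by
      intro t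
      by_cases h : t ∈ Set.Ioc 0 a
      · rw [Set.indicator_of_mem h]
        have h1 := Set.mem_Ioc.1 h
        have : nuFn a t = 1 := by unfold nuFn; rw [if_pos ⟨h1.1, h1.2⟩]
        rw [this]; push_cast; ring
      · rw [Set.indicator_of_notMem h,
          nuFn_eq_zero (by rwa [Set.uIoc_of_le ha])]
        push_cast; ring
    rw [show (fun t : ℝ => (nuFn a t : ℂ) * Complex.exp (Complex.I * m * t))
        = Set.indicator (Set.Ioc 0 a) (fun t : ℝ => Complex.exp (Complex.I * m * t))
        from funext heq]
    rw [integral_indicator measurableSet_Ioc, ← intervalIntegral.integral_of_le ha, key]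
  · have heq : ∀ t : ℝ, (nuFn a t : ℂ) * Complex.exp (Complex.I * m * t)
        = -Set.indicator (Set.Ioc a 0) (fun t : ℝ => Complex.exp (Complex.I * m * t)) t := by
      intro t
      by_cases h : t ∈ Set.Ioc a 0
      · rw [Set.indicator_of_mem h]
        have h1 := Set.mem_Ioc.1 h
        have : nuFn a t = -1 := by
          unfold nuFn
          rw [if_neg (by rintro ⟨h3, h4⟩; linarith [h1.2]), if_pos ⟨h1.1, h1.2⟩]
        rw [this]; push_cast; ring
      · rw [Set.indicator_of_notMem h,
          nuFn_eq_zero (by rwa [Set.uIoc_of_ge ha.le])]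
        push_cast; ring
    rw [show (fun t : ℝ => (nuFn a t : ℂ) * Complex.exp (Complex.I * m * t))
        = fun t => -Set.indicator (Set.Ioc a 0) (fun t : ℝ => Complex.exp (Complex.I * m * t)) t
        from funext heq]
    rw [integral_neg, integral_indicator measurableSet_Ioc,
      ← intervalIntegral.integral_of_le ha.le, ← intervalIntegral.integral_symm, key]

lemma norm_exp_I_mul (m t : ℝ) : ‖Complex.exp (Complex.I * m * t)‖ = 1 := by
  rw [show (Complex.I * (m:ℂ) * (t:ℂ)) = ((m * t : ℝ) : ℂ) * Complex.I by push_cast; ring]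
  exact Complex.norm_exp_ofReal_mul_I _

/-- If `⟨s⟩² F̂(s) ∈ L¹` and `F(λ) = ∫ e^{iλs} F̂(s) ds`, then for any `k` the
function `G(λ) = d/dλ[(e^{ikλ}F(λ) − F(0))/λ]` has integrable Fourier
transform with `‖Ĝ‖₁ ≲ ⟨k⟩² ‖⟨s⟩²F̂‖₁`, uniformly in `k` and `F`. -/
theorem deriv_quotient_fourier_bound :
    ∃ C : ℝ, 0 < C ∧
      ∀ (F Fhat : ℝ → ℂ) (k : ℝ),
        Integrable (fun s : ℝ => (1 + s ^ 2) * ‖Fhat s‖) →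
        (∀ l : ℝ, F l = ∫ s : ℝ, Complex.exp (Complex.I * l * s) * Fhat s) →
        ∃ Ghat : ℝ → ℂ, Integrable Ghat ∧
          (∀ l : ℝ, l ≠ 0 →
            deriv (fun m : ℝ => (Complex.exp (Complex.I * k * m) * F m - F 0) / m) l =
              ∫ s : ℝ, Complex.exp (Complex.I * l * s) * Ghat s) ∧
          (∫ s : ℝ, ‖Ghat s‖) ≤ C * (1 + k ^ 2) * ∫ s : ℝ, (1 + s ^ 2) * ‖Fhat s‖ := by
  refine ⟨2, by norm_num, ?_⟩
  intro F Fhat k hInt hF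
  by_cases hm : AEStronglyMeasurable Fhat volume
  case neg =>
    refine ⟨fun _ => (0:ℂ), integrable_zero _ _ _, ?_, ?_⟩
    · have hF0 : ∀ l : ℝ, F l = 0 := by
        intro l
        rw [hF l, integral_non_aestronglyMeasurable]
        intro hc
        apply hm
        have heq : Fhat = fun s : ℝ =>
            Complex.exp (-(Complex.I * l * s)) * (Complex.exp (Complex.I * l * s) * Fhat s) := by
          funext s
          rw [← mul_assoc, ← Complex.exp_add, neg_add_cancel, Complex.exp_zero, one_mul]
        rw [heq]
        exact ((((continuous_const.mul Complex.continuous_ofReal).neg).cexp).aestronglyMeasurable).mul hc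
      intro l hl
      have hzero : (fun m : ℝ => (Complex.exp (Complex.I * k * m) * F m - F 0) / m)
          = fun _ : ℝ => (0 : ℂ) := by
        funext m
        rw [hF0, hF0]
        simp
      rw [hzero, deriv_const]
      simp
    · simp only [norm_zero]
      rw [integral_zero]
      have h1 : 0 ≤ ∫ s : ℝ, (1 + s ^ 2) * ‖Fhat s‖ :=
        integral_nonneg fun s => mul_nonneg (by positivity) (norm_nonneg _)
      nlinarith
  case pos =>
    obtain ⟨f, hf_sm, hfe⟩ : ∃ f, StronglyMeasurable f ∧ Fhat =ᵐ[volume] f :=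
      ⟨hm.mk Fhat, hm.stronglyMeasurable_mk, hm.ae_eq_mk⟩
    have hf_meas : Measurable f := hf_sm.measurable
    have hIntf : Integrable (fun s : ℝ => (1 + s ^ 2) * ‖f s‖) :=
      hInt.congr (hfe.mono fun s hs => by dsimp; rw [hs])
    have hIval : (∫ s : ℝ, (1 + s ^ 2) * ‖Fhat s‖) = ∫ s : ℝ, (1 + s ^ 2) * ‖f s‖ :=
      integral_congr_ae (hfe.mono fun s hs => by dsimp; rw [hs])
    have hf_int : Integrable f :=
      hIntf.mono' hf_meas.aestronglyMeasurable
        (Filter.Eventually.of_forall fun s => by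
          have := norm_nonneg (f s); nlinarith [sq_nonneg s])
    -- product functions
    set Q : ℝ × ℝ → ℂ := fun p => (nuFn (p.1 + k) p.2 : ℂ) * f p.1 with hQ_def
    set Qt : ℝ × ℝ → ℂ := fun p => (p.2 : ℂ) * ((nuFn (p.1 + k) p.2 : ℂ) * f p.1) with hQt_def
    set M : ℝ × ℝ → ℝ := fun p =>
      Set.indicator (Set.uIoc 0 (p.1 + k)) (fun _ => (1 + |p.1 + k|) * ‖f p.1‖) p.2 with hM_def
    have hnu_meas : Measurable fun p : ℝ × ℝ => ((nuFn (p.1 + k) p.2 : ℝ) : ℂ) :=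
      Complex.measurable_ofReal.comp (nuFn_measurable k)
    have hQ_meas : AEStronglyMeasurable Q (volume.prod volume) :=
      (hnu_meas.mul (hf_meas.comp measurable_fst)).aestronglyMeasurable
    have hQt_meas : AEStronglyMeasurable Qt (volume.prod volume) :=
      ((Complex.measurable_ofReal.comp measurable_snd).mul
        (hnu_meas.mul (hf_meas.comp measurable_fst))).aestronglyMeasurable
    have hM_meas : AEStronglyMeasurable M (volume.prod volume) := by
      have h1 : M = fun p : ℝ × ℝ =>
          if (0 < p.2 ∧ p.2 ≤ p.1 + k) ∨ (p.1 + k < p.2 ∧ p.2 ≤ 0)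
          then (1 + |p.1 + k|) * ‖f p.1‖ else 0 := by
        funext p
        simp only [hM_def]
        by_cases h : p.2 ∈ Set.uIoc 0 (p.1 + k)
        · rw [Set.indicator_of_mem h, if_pos (Set.mem_uIoc.1 h)]
        · rw [Set.indicator_of_notMem h, if_neg (fun hc => h (Set.mem_uIoc.2 hc))]
      rw [h1]
      refine Measurable.aestronglyMeasurable (Measurable.ite ?_ ?_ measurable_const)
      · exact ((measurableSet_lt measurable_const measurable_snd).inter
            (measurableSet_le measurable_snd (measurable_fst.add_const k))).union
          ((measurableSet_lt (measurable_fst.add_const k) measurable_snd).inter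
            (measurableSet_le measurable_snd measurable_const))
      · exact (((measurable_fst.add_const k).abs.const_add 1).mul
          ((hf_meas.comp measurable_fst).norm))
    have hM : Integrable M (volume.prod volume) := by
      rw [integrable_prod_iff hM_meas]
      constructor
      · refine Filter.Eventually.of_forall fun s => ?_
        exact ind_integrable (s + k) ((1 + |s + k|) * ‖f s‖)
      · have hval : ∀ s : ℝ, (∫ t, ‖M (s, t)‖) = |s + k| * ((1 + |s + k|) * ‖f s‖) := by
          intro s
          have h0 : 0 ≤ (1 + |s + k|) * ‖f s‖ :=
            mul_nonneg (by positivity) (norm_nonneg _)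
          have heq2 : (fun t => ‖M (s, t)‖)
              = Set.indicator (Set.uIoc 0 (s + k)) fun _ => (1 + |s + k|) * ‖f s‖ := by
            funext t
            simp only [hM_def]
            by_cases h : t ∈ Set.uIoc 0 (s + k)
            · rw [Set.indicator_of_mem h, Real.norm_eq_abs, _root_.abs_of_nonneg h0]
            · rw [Set.indicator_of_notMem h]
              simp
          rw [heq2, ind_integral]
        refine (Integrable.const_mul hIntf (4 * (1 + k ^ 2))).mono' ?_ ?_
        · refine Measurable.aestronglyMeasurable ?_
          have heq3 : (fun s => ∫ t, ‖M (s, t)‖)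
              = fun s => |s + k| * ((1 + |s + k|) * ‖f s‖) := funext hval
          rw [heq3]
          exact ((measurable_id.add_const k).abs).mul
            (((measurable_id.add_const k).abs.const_add 1).mul hf_meas.norm)
        · refine Filter.Eventually.of_forall fun s => ?_
          rw [Real.norm_eq_abs, hval s, _root_.abs_of_nonneg
            (mul_nonneg (abs_nonneg _) (mul_nonneg (by positivity) (norm_nonneg _)))]
          have h1 : |s + k| ^ 2 = (s + k) ^ 2 := sq_abs _
          have h2 : 0 ≤ ‖f s‖ := norm_nonneg _
          have h3 : 0 ≤ |s + k| := abs_nonneg _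
          nlinarith [sq_nonneg (|s + k| - 1), sq_nonneg (s - k), sq_nonneg (s + k),
            sq_nonneg (s * k), sq_nonneg (1 + k * s), mul_nonneg (mul_nonneg h3 h3) h2]
    have hMnonneg : ∀ p : ℝ × ℝ, 0 ≤ M p := by
      intro p
      simp only [hM_def]
      exact Set.indicator_nonneg
        (fun _ _ => mul_nonneg (by positivity) (norm_nonneg _)) _
    have hQnorm : ∀ p : ℝ × ℝ, ‖Q p‖ = |nuFn (p.1 + k) p.2| * ‖f p.1‖ := by
      intro p
      simp only [hQ_def]
      rw [norm_mul, Complex.norm_real, Real.norm_eq_abs]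
    have hQtnorm : ∀ p : ℝ × ℝ, ‖Qt p‖ = |p.2| * (|nuFn (p.1 + k) p.2| * ‖f p.1‖) := by
      intro p
      simp only [hQt_def]
      rw [norm_mul, norm_mul, Complex.norm_real, Complex.norm_real,
        Real.norm_eq_abs, Real.norm_eq_abs]
    have hQle : ∀ p : ℝ × ℝ, ‖Q p‖ ≤ M p := by
      intro p
      rw [hQnorm p]
      rcases nuFn_cases (p.1 + k) p.2 with h | ⟨h1, h2, _⟩
      · rw [h]; simpa using hMnonneg p
      · rw [h1, one_mul]
        simp only [hM_def]
        rw [Set.indicator_of_mem h2]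
        have := norm_nonneg (f p.1)
        nlinarith [abs_nonneg (p.1 + k)]
    have hQtle : ∀ p : ℝ × ℝ, ‖Qt p‖ ≤ M p := by
      intro p
      rw [hQtnorm p]
      rcases nuFn_cases (p.1 + k) p.2 with h | ⟨h1, h2, h3⟩
      · rw [h]; simpa using hMnonneg p
      · rw [h1, one_mul]
        simp only [hM_def]
        rw [Set.indicator_of_mem h2]
        have h4 := norm_nonneg (f p.1)
        have h5 : |p.2| ≤ 1 + |p.1 + k| := le_trans h3 (by linarith [abs_nonneg (p.1 + k)])
        exact mul_le_mul_of_nonneg_right h5 h4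
    have hQ : Integrable Q (volume.prod volume) :=
      hM.mono' hQ_meas (Filter.Eventually.of_forall hQle)
    have hQt : Integrable Qt (volume.prod volume) :=
      hM.mono' hQt_meas (Filter.Eventually.of_forall hQtle)
    have hQe : ∀ m : ℝ, Integrable
        (fun p : ℝ × ℝ => Complex.exp (Complex.I * m * p.2) * Q p) (volume.prod volume) := by
      intro m
      refine hM.mono' ?_ (Filter.Eventually.of_forall fun p => ?_)
      · exact (((Complex.measurable_ofReal.comp measurable_snd).const_mul
          (Complex.I * m)).cexp.aestronglyMeasurable).mul hQ_meas
      · rw [norm_mul, norm_exp_I_mul, one_mul]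
        exact hQle p
    -- the auxiliary functions
    set H : ℝ → ℂ := fun t => Complex.I * ∫ s, Q (s, t) with hH_def
    set Ghat : ℝ → ℂ := fun t => Complex.I * t * H t with hG_def
    have hGeq : Ghat = fun t => -∫ s, Qt (s, t) := by
      funext t
      simp only [hG_def, hH_def]
      have h1 : (∫ s, Qt (s, t)) = (t : ℂ) * ∫ s, Q (s, t) := by
        simp only [hQt_def, hQ_def]
        rw [← integral_const_mul]
      rw [h1]
      linear_combination ((t : ℂ) * ∫ s, Q (s, t)) * Complex.I_mul_I
    have hH : Integrable H := by
      rw [hH_def]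
      exact (hQ.integral_prod_right).const_mul Complex.I
    have hGhat : Integrable Ghat := by
      rw [hGeq]
      exact (hQt.integral_prod_right).neg
    have hGnorm : ∀ t : ℝ, ‖Ghat t‖ = |t| * ‖H t‖ := by
      intro t
      simp only [hG_def]
      rw [norm_mul, norm_mul, Complex.norm_I, one_mul, Complex.norm_real, Real.norm_eq_abs]
    -- derivative of the Fourier integral
    have hderiv : ∀ m₀ : ℝ, HasDerivAt (fun m : ℝ => ∫ t : ℝ, Complex.exp (Complex.I * m * t) * H t)
        (∫ t : ℝ, Complex.exp (Complex.I * m₀ * t) * Ghat t) m₀ := by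
      intro m₀
      have key := hasDerivAt_integral_of_dominated_loc_of_deriv_le (μ := volume)
        (F := fun (m : ℝ) (t : ℝ) => Complex.exp (Complex.I * m * t) * H t)
        (F' := fun (m : ℝ) (t : ℝ) => Complex.exp (Complex.I * m * t) * Ghat t)
        (x₀ := m₀) (bound := fun t => ‖Ghat t‖) (Metric.ball_mem_nhds m₀ zero_lt_one)
        ?_ ?_ ?_ ?_ ?_ ?_
      · exact key.2
      · refine Filter.Eventually.of_forall fun x => ?_
        exact (((Complex.measurable_ofReal.const_mul
          (Complex.I * x)).cexp).aestronglyMeasurable).mul hH.1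
      · refine hH.norm.mono' ?_ (Filter.Eventually.of_forall fun t => ?_)
        · exact (((Complex.measurable_ofReal.const_mul
            (Complex.I * m₀)).cexp).aestronglyMeasurable).mul hH.1
        · rw [norm_mul, norm_exp_I_mul, one_mul]
      · exact (((Complex.measurable_ofReal.const_mul
          (Complex.I * m₀)).cexp).aestronglyMeasurable).mul hGhat.1
      · refine Filter.Eventually.of_forall fun t => fun x _ => ?_
        rw [norm_mul, norm_exp_I_mul, one_mul]
      · exact hGhat.norm
      · refine Filter.Eventually.of_forall fun t => fun x _ => ?_
        have h0 : HasDerivAt (fun w : ℂ => Complex.I * w * t) (Complex.I * t) (x : ℂ) := by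
          simpa using ((hasDerivAt_id (x : ℂ)).const_mul Complex.I).mul_const (t : ℂ)
        have h1 := (h0.cexp).comp_ofReal
        have h2 := h1.mul_const (H t)
        refine h2.congr_deriv ?_
        simp only [hG_def]
        ring
    -- identification with the original quotient
    have hPhi : ∀ m : ℝ, m ≠ 0 →
        (Complex.exp (Complex.I * k * m) * F m - F 0) / m
          = ∫ t : ℝ, Complex.exp (Complex.I * m * t) * H t := by
      intro m hmne
      have hmC : (m : ℂ) ≠ 0 := Complex.ofReal_ne_zero.2 hmne
      have step1 : (∫ t : ℝ, Complex.exp (Complex.I * m * t) * H t)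
          = Complex.I * ∫ t : ℝ, ∫ s : ℝ, Complex.exp (Complex.I * m * t) * Q (s, t) := by
        rw [← integral_const_mul]
        refine integral_congr_ae (Filter.Eventually.of_forall fun t => ?_)
        simp only [hH_def]
        rw [integral_const_mul]
        ring
      have step2 : (∫ t : ℝ, ∫ s : ℝ, Complex.exp (Complex.I * m * t) * Q (s, t))
          = ∫ s : ℝ, ∫ t : ℝ, Complex.exp (Complex.I * m * t) * Q (s, t) :=
        (integral_integral_swap (f := fun (s t : ℝ) => Complex.exp (Complex.I * m * t) * Q (s, t))
          (hQe m)).symm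
      have step3 : ∀ s : ℝ, (∫ t : ℝ, Complex.exp (Complex.I * m * t) * Q (s, t))
          = ((Complex.exp (Complex.I * m * (s + k)) - 1) / (Complex.I * m)) * f s := by
        intro s
        have heq4 : (fun t : ℝ => Complex.exp (Complex.I * m * t) * Q (s, t))
            = fun t : ℝ => ((nuFn (s + k) t : ℂ) * Complex.exp (Complex.I * m * t)) * f s := by
          funext t
          simp only [hQ_def]
          ring
        rw [heq4, integral_mul_const, nuFn_integral_exp (s + k) m hmne]
        push_cast
        ring
      have step4 : (∫ t : ℝ, Complex.exp (Complex.I * m * t) * H t)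
          = ∫ s : ℝ, (Complex.exp (Complex.I * m * (s + k)) * f s - f s) / m := by
        rw [step1, step2, ← integral_const_mul]
        refine integral_congr_ae (Filter.Eventually.of_forall fun s => ?_)
        dsimp only
        rw [step3 s]
        field_simp
      have hfd : Integrable (fun s : ℝ => Complex.exp (Complex.I * m * (s + k)) * f s) := by
        refine hf_int.norm.mono' ?_ (Filter.Eventually.of_forall fun s => ?_)
        · exact (((Complex.measurable_ofReal.add_const ((k:ℝ):ℂ)).const_mul
            (Complex.I * m)).cexp.mul hf_meas).aestronglyMeasurable
        · have hne : ‖Complex.exp (Complex.I * m * (s + k))‖ = 1 := by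
            rw [show (Complex.I * (m:ℂ) * ((s:ℂ) + (k:ℂ))) = ((m * (s + k) : ℝ) : ℂ) * Complex.I
              by push_cast; ring]
            exact Complex.norm_exp_ofReal_mul_I _
          rw [norm_mul, hne, one_mul]
      have step5 : (∫ s : ℝ, (Complex.exp (Complex.I * m * (s + k)) * f s - f s) / m)
          = ((∫ s : ℝ, Complex.exp (Complex.I * m * (s + k)) * f s) - ∫ s : ℝ, f s) / m := by
        rw [integral_div]
        congr 1
        exact integral_sub hfd hf_int
      have step6 : (∫ s : ℝ, Complex.exp (Complex.I * m * (s + k)) * f s)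
          = Complex.exp (Complex.I * k * m) * F m := by
        have h1 : (fun s : ℝ => Complex.exp (Complex.I * m * (s + k)) * f s)
            = fun s : ℝ => Complex.exp (Complex.I * k * m) * (Complex.exp (Complex.I * m * s) * f s) := by
          funext s
          rw [← mul_assoc, ← Complex.exp_add]
          congr 1
          ring
        rw [h1, integral_const_mul]
        congr 1
        rw [hF m]
        exact (integral_congr_ae (hfe.mono fun s hs => by rw [hs])).symm
      have step7 : (∫ s : ℝ, f s) = F 0 := by
        rw [hF 0]
        exact (integral_congr_ae (hfe.mono fun s hs => by simp [hs])).symm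
      rw [step4, step5, step6, step7]
    refine ⟨Ghat, hGhat, ?_, ?_⟩
    · intro l hl
      have hev : (fun m : ℝ => (Complex.exp (Complex.I * k * m) * F m - F 0) / m)
          =ᶠ[nhds l] fun m : ℝ => ∫ t : ℝ, Complex.exp (Complex.I * m * t) * H t :=
        (eventually_ne_nhds hl).mono fun m hm' => hPhi m hm'
      rw [hev.deriv_eq, (hderiv l).deriv]
    · have step1 : (∫ t : ℝ, ‖Ghat t‖) ≤ ∫ t : ℝ, ∫ s : ℝ, ‖Qt (s, t)‖ := by
        refine integral_mono hGhat.norm hQt.integral_norm_prod_right ?_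
        intro t
        show ‖Ghat t‖ ≤ ∫ s : ℝ, ‖Qt (s, t)‖
        have h1 : ‖Ghat t‖ = ‖∫ s : ℝ, Qt (s, t)‖ := by rw [hGeq, norm_neg]
        rw [h1]
        exact norm_integral_le_integral_norm _
      have step2 : (∫ t : ℝ, ∫ s : ℝ, ‖Qt (s, t)‖) = ∫ s : ℝ, ∫ t : ℝ, ‖Qt (s, t)‖ :=
        (integral_integral_swap (f := fun (s t : ℝ) => ‖Qt (s, t)‖) hQt.norm).symm
      have step3 : (∫ s : ℝ, ∫ t : ℝ, ‖Qt (s, t)‖)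
          ≤ ∫ s : ℝ, 2 * (1 + k ^ 2) * ((1 + s ^ 2) * ‖f s‖) := by
        refine integral_mono hQt.integral_norm_prod_left (hIntf.const_mul _) ?_
        intro s
        dsimp only
        have pnt : ∀ t : ℝ, ‖Qt (s, t)‖
            ≤ Set.indicator (Set.uIoc 0 (s + k)) (fun _ => |s + k| * ‖f s‖) t := by
          intro t
          rw [hQtnorm (s, t)]
          rcases nuFn_cases (s + k) t with h | ⟨h1, h2, h3⟩
          · rw [h]
            simp only [abs_zero, zero_mul, mul_zero]
            exact Set.indicator_nonneg
              (fun _ _ => mul_nonneg (abs_nonneg _) (norm_nonneg _)) _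
          · rw [h1, one_mul, Set.indicator_of_mem h2]
            exact mul_le_mul_of_nonneg_right h3 (norm_nonneg _)
        calc (∫ t : ℝ, ‖Qt (s, t)‖)
            ≤ ∫ t : ℝ, Set.indicator (Set.uIoc 0 (s + k)) (fun _ => |s + k| * ‖f s‖) t := by
              refine integral_mono_of_nonneg
                (Filter.Eventually.of_forall fun t => norm_nonneg _)
                (ind_integrable _ _) (Filter.Eventually.of_forall pnt)
          _ = |s + k| * (|s + k| * ‖f s‖) := ind_integral _ _
          _ ≤ 2 * (1 + k ^ 2) * ((1 + s ^ 2) * ‖f s‖) := by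
              nlinarith [norm_nonneg (f s), sq_nonneg (s - k), sq_nonneg (s + k),
                sq_nonneg (s * k), sq_nonneg (1 + k * s), sq_nonneg (1 - k * s),
                _root_.sq_abs (s + k), abs_nonneg (s + k),
                abs_mul_abs_self (s + k)]
      have step4 : (∫ s : ℝ, 2 * (1 + k ^ 2) * ((1 + s ^ 2) * ‖f s‖))
          = 2 * (1 + k ^ 2) * ∫ s : ℝ, (1 + s ^ 2) * ‖Fhat s‖ := by
        rw [integral_const_mul, hIval]
      linarith [step1, step2 ▸ step3]
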